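/- Let S = M(G; I, Λ; P) be a finite Rees matrix semigroup with normalized matrix P. If S is an equational domain (in the semigroup language with constants), then the group G is an equational domain in the group language with constants; equivalently, the set {(x,y) ∈ G^2 : x = 1 or y = 1} is algebraic over G. -/

import Mathlib

namespace Stmt

/-- Evaluation of a single letter (variable or constant). -/
def evalL {S : Type*} {n : ℕ} (p : Fin n → S) : Fin n ⊕ S → S
  | Sum.inl i => p i
  | Sum.inr s => s

/-- A semigroup term with constants: a nonempty word in variables `x₁,…,xₙ`
and constants from `S` (head letter together with the remaining letters). -/
abbrev SgTerm (S : Type*) (n : ℕ) : Type _ := (Fin n ⊕ S) × List (Fin n ⊕ S)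

/-- Value of a term at a point, w.r.t. an explicit binary operation `mul`. -/
def SgTerm.eval {S : Type*} {n : ℕ} (mul : S → S → S) (t : SgTerm S n)
    (p : Fin n → S) : S :=
  t.2.foldl (fun a l => mul a (evalL p l)) (evalL p t.1)

/-- `Y ⊆ Sⁿ` is algebraic: it is the solution set of a system of equations
`t(X) = s(X)` between semigroup terms with constants. -/
def IsAlgebraic {S : Type*} {n : ℕ} (mul : S → S → S) (Y : Set (Fin n → S)) : Prop :=
  ∃ Sys : Set (SgTerm S n × SgTerm S n),
    Y = {p | ∀ e ∈ Sys, SgTerm.eval mul e.1 p = SgTerm.eval mul e.2 p}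

/-- `S` is an equational domain: every finite union of algebraic sets is algebraic. -/
def IsEqDomain (S : Type*) (mul : S → S → S) : Prop :=
  ∀ (n m : ℕ) (Y : Fin m → Set (Fin n → S)),
    (∀ i, IsAlgebraic mul (Y i)) → IsAlgebraic mul (⋃ i, Y i)

/-- A group term with constants: a word in integer powers of variables and
constants from `G`, i.e. an element of `F(X) ∗ G`. -/
abbrev GTerm (G : Type*) (n : ℕ) : Type _ := List ((Fin n × ℤ) ⊕ G)

/-- Value of a group term at a point. -/
def GTerm.eval {G : Type*} [Group G] {n : ℕ} (t : GTerm G n) (p : Fin n → G) : G :=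
  (t.map (fun l => match l with
    | Sum.inl (i, k) => p i ^ k
    | Sum.inr g => g)).prod

/-- `Y ⊆ Gⁿ` is algebraic over the group `G` (group equations with constants). -/
def IsGAlgebraic {G : Type*} [Group G] {n : ℕ} (Y : Set (Fin n → G)) : Prop :=
  ∃ Sys : Set (GTerm G n × GTerm G n),
    Y = {p | ∀ e ∈ Sys, GTerm.eval e.1 p = GTerm.eval e.2 p}

/-- `G` is an equational domain as a group. -/
def IsGEqDomain (G : Type*) [Group G] : Prop :=
  ∀ (n m : ℕ) (Y : Fin m → Set (Fin n → G)),
    (∀ i, IsGAlgebraic (Y i)) → IsGAlgebraic (⋃ i, Y i)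

/-- Multiplication of the Rees matrix semigroup `M(G; I, Λ; P)` on `Λ × G × I`:
`(λ,g,i)(μ,h,j) = (λ, g · p_{iμ} · h, j)`. -/
def reesMul {G I Λ : Type*} [Group G] (P : I → Λ → G) (a b : Λ × G × I) : Λ × G × I :=
  (a.1, a.2.1 * P a.2.2 b.1 * b.2.1, b.2.2)

/-- `P` is normalized w.r.t. the distinguished indices `i0 ∈ I`, `l0 ∈ Λ`:
its first row and first column consist of identity elements. -/
def Normalized {G I Λ : Type*} [Group G] (P : I → Λ → G) (i0 : I) (l0 : Λ) : Prop :=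
  (∀ i, P i l0 = 1) ∧ (∀ l, P i0 l = 1)

/-- `P` is nonsingular: no two equal rows and no two equal columns. -/
def Nonsingular {G I Λ : Type*} [Group G] (P : I → Λ → G) : Prop :=
  (∀ i j : I, (∀ l, P i l = P j l) → i = j) ∧
  (∀ l m : Λ, (∀ i, P i l = P i m) → l = m)

section Aux

variable {G I Λ : Type*} [Group G]

/-- Value of a single group-term letter. -/
def letterVal {n : ℕ} (p : Fin n → G) : (Fin n × ℤ) ⊕ G → G
  | Sum.inl (i, k) => p i ^ k
  | Sum.inr g => g

lemma eval_eq_prod {n : ℕ} (t : GTerm G n) (p : Fin n → G) :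
    GTerm.eval t p = (t.map (letterVal p)).prod := rfl

lemma eval_nil {n : ℕ} (p : Fin n → G) : GTerm.eval ([] : GTerm G n) p = 1 := rfl

lemma eval_cons {n : ℕ} (l) (t : GTerm G n) (p : Fin n → G) :
    GTerm.eval (l :: t) p = letterVal p l * GTerm.eval t p := by
  simp [eval_eq_prod]

lemma eval_append {n : ℕ} (t s : GTerm G n) (p : Fin n → G) :
    GTerm.eval (t ++ s) p = GTerm.eval t p * GTerm.eval s p := by
  simp [eval_eq_prod]

lemma eval_singleton {n : ℕ} (l) (p : Fin n → G) :
    GTerm.eval ([l] : GTerm G n) p = letterVal p l := by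
  simp [eval_eq_prod]

/-- Formal inverse of a letter. -/
def invLetter {n : ℕ} : (Fin n × ℤ) ⊕ G → (Fin n × ℤ) ⊕ G
  | Sum.inl (i, k) => Sum.inl (i, -k)
  | Sum.inr g => Sum.inr g⁻¹

lemma letterVal_invLetter {n : ℕ} (p : Fin n → G) (l) :
    letterVal p (invLetter l) = (letterVal p l)⁻¹ := by
  rcases l with ⟨i, k⟩ | g <;> simp [invLetter, letterVal]

/-- Formal inverse of a group term. -/
def gInv {n : ℕ} (t : GTerm G n) : GTerm G n := (t.map invLetter).reverse

lemma eval_gInv {n : ℕ} (t : GTerm G n) (p : Fin n → G) :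
    GTerm.eval (gInv t) p = (GTerm.eval t p)⁻¹ := by
  induction t with
  | nil => simp [gInv, eval_nil]
  | cons l t ih =>
    have h : gInv (l :: t) = gInv t ++ [invLetter l] := by simp [gInv]
    rw [h, eval_append, ih, eval_singleton, letterVal_invLetter, eval_cons, mul_inv_rev]

/-- Formal natural power of a group term. -/
def gPow {n : ℕ} (t : GTerm G n) : ℕ → GTerm G n
  | 0 => []
  | m + 1 => t ++ gPow t m

lemma eval_gPow {n : ℕ} (t : GTerm G n) (m : ℕ) (p : Fin n → G) :
    GTerm.eval (gPow t m) p = GTerm.eval t p ^ m := by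
  induction m with
  | zero => simp [gPow, eval_nil]
  | succ m ih => rw [gPow, eval_append, ih, pow_succ']

/-- Formal integer power of a group term. -/
def gZpow {n : ℕ} (t : GTerm G n) (k : ℤ) : GTerm G n :=
  if 0 ≤ k then gPow t k.toNat else gPow (gInv t) (-k).toNat

lemma eval_gZpow {n : ℕ} (t : GTerm G n) (k : ℤ) (p : Fin n → G) :
    GTerm.eval (gZpow t k) p = GTerm.eval t p ^ k := by
  unfold gZpow
  split_ifs with hk
  · rw [eval_gPow, ← zpow_natCast, Int.toNat_of_nonneg hk]
  · rw [eval_gPow, eval_gInv, inv_pow, ← zpow_natCast,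
      Int.toNat_of_nonneg (by omega : (0:ℤ) ≤ -k), zpow_neg, inv_inv]

/-- Substitution of group terms for the variables of a group term. -/
def gSubst {m n : ℕ} (t : GTerm G m) (σ : Fin m → GTerm G n) : GTerm G n :=
  (t.map (fun l => match l with
    | Sum.inl (i, k) => gZpow (σ i) k
    | Sum.inr g => [Sum.inr g])).flatten

lemma eval_gSubst {m n : ℕ} (t : GTerm G m) (σ : Fin m → GTerm G n) (p : Fin n → G) :
    GTerm.eval (gSubst t σ) p = GTerm.eval t (fun i => GTerm.eval (σ i) p) := by
  induction t with
  | nil => simp [gSubst, eval_nil]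
  | cons l t ih =>
    have h : gSubst (l :: t) σ =
        (match l with
          | Sum.inl (i, k) => gZpow (σ i) k
          | Sum.inr g => [Sum.inr g]) ++ gSubst t σ := by simp [gSubst]
    rw [h, eval_append, ih, eval_cons]
    rcases l with ⟨i, k⟩ | g
    · rw [eval_gZpow]; rfl
    · rw [eval_singleton]; rfl

end Aux
section Rees

variable {G I Λ : Type*} [Group G] (P : I → Λ → G) (i0 : I) (l0 : Λ) {n : ℕ}

def lpart : Fin n ⊕ (Λ × G × I) → Λ
  | Sum.inl _ => l0
  | Sum.inr s => s.1

def ipart : Fin n ⊕ (Λ × G × I) → I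
  | Sum.inl _ => i0
  | Sum.inr s => s.2.2

def gword : Fin n ⊕ (Λ × G × I) → GTerm G n
  | Sum.inl j => [Sum.inl (j, 1)]
  | Sum.inr s => [Sum.inr s.2.1]

lemma evalL_point (p : Fin n → G) (l : Fin n ⊕ (Λ × G × I)) :
    evalL (fun j => ((l0, p j, i0) : Λ × G × I)) l
      = (lpart l0 l, GTerm.eval (gword l) p, ipart i0 l) := by
  rcases l with j | s <;> simp [evalL, lpart, ipart, gword, eval_singleton, letterVal]

def midW : I → List (Fin n ⊕ (Λ × G × I)) → GTerm G n
  | _, [] => []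
  | i, b :: rest => Sum.inr (P i (lpart l0 b)) :: (gword b ++ midW (ipart i0 b) rest)

def iend : I → List (Fin n ⊕ (Λ × G × I)) → I
  | i, [] => i
  | _, b :: rest => iend (ipart i0 b) rest

lemma foldl_point (p : Fin n → G) (ls : List (Fin n ⊕ (Λ × G × I))) :
    ∀ s : Λ × G × I,
      ls.foldl (fun a l => reesMul P a (evalL (fun j => ((l0, p j, i0) : Λ × G × I)) l)) s
        = (s.1, s.2.1 * GTerm.eval (midW P i0 l0 s.2.2 ls) p, iend i0 s.2.2 ls) := by
  induction ls with
  | nil => intro s; simp [midW, iend, eval_nil]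
  | cons b rest ih =>
    intro s
    rw [List.foldl_cons, evalL_point]
    show (rest.foldl _ (reesMul P s (lpart l0 b, GTerm.eval (gword b) p, ipart i0 b))) = _
    rw [ih]
    simp only [reesMul, midW, iend, eval_cons, eval_append, letterVal, mul_assoc]

/-- Translation of a semigroup term over the Rees semigroup into a group term. -/
def trT (t : SgTerm (Λ × G × I) n) : GTerm G n :=
  gword t.1 ++ midW P i0 l0 (ipart i0 t.1) t.2

lemma eval_trT (t : SgTerm (Λ × G × I) n) (p : Fin n → G) :
    SgTerm.eval (reesMul P) t (fun j => ((l0, p j, i0) : Λ × G × I))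
      = (lpart l0 t.1, GTerm.eval (trT P i0 l0 t) p, iend i0 (ipart i0 t.1) t.2) := by
  show (t.2.foldl _ (evalL _ t.1)) = _
  rw [evalL_point, foldl_point]
  simp [trT, eval_append]

end Rees
section Trivial

variable {G I Λ : Type*} [Group G] (P : I → Λ → G) {n : ℕ}

lemma foldl_fst (p : Fin n → (Λ × G × I)) (ls : List (Fin n ⊕ (Λ × G × I))) :
    ∀ s : Λ × G × I,
      (ls.foldl (fun a l => reesMul P a (evalL p l)) s).1 = s.1 := by
  induction ls with
  | nil => intro s; rfl
  | cons b rest ih => intro s; rw [List.foldl_cons, ih]; rfl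

lemma eval_fst (t : SgTerm (Λ × G × I) n) (p : Fin n → (Λ × G × I)) :
    (SgTerm.eval (reesMul P) t p).1 = (evalL p t.1).1 := by
  show (t.2.foldl _ (evalL p t.1)).1 = _
  rw [foldl_fst]

lemma foldl_snd (p : Fin n → (Λ × G × I)) (ls : List (Fin n ⊕ (Λ × G × I))) :
    ∀ s : Λ × G × I,
      (ls.foldl (fun a l => reesMul P a (evalL p l)) s).2.2
        = (evalL p (ls.getLastD (Sum.inr s))).2.2 := by
  induction ls with
  | nil => intro s; rfl
  | cons b rest ih =>
    intro s
    rw [List.foldl_cons, ih, List.getLastD_cons]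
    cases rest with
    | nil => simp [evalL, reesMul]
    | cons c cs => simp only [List.getLastD_cons]

lemma eval_snd (t : SgTerm (Λ × G × I) n) (p : Fin n → (Λ × G × I)) :
    (SgTerm.eval (reesMul P) t p).2.2 = (evalL p (t.2.getLastD t.1)).2.2 := by
  show (t.2.foldl _ (evalL p t.1)).2.2 = _
  rw [foldl_snd]
  cases h : t.2 with
  | nil => simp [evalL]
  | cons c cs => simp only [List.getLastD_cons]

lemma diag_trick {S' β : Type*} (φ : S' → β) (c s : S') (a b : Fin 2 ⊕ S')
    (h1 : ∀ t : S', φ (evalL ![c, t] a) = φ (evalL ![c, t] b))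
    (h2 : ∀ t : S', φ (evalL ![t, c] a) = φ (evalL ![t, c] b)) :
    φ (evalL ![s, s] a) = φ (evalL ![s, s] b) := by
  rcases a with j | x <;> rcases b with k | y
  · fin_cases j <;> fin_cases k <;> simp [evalL]
  · fin_cases j
    · have := h2 s; simpa [evalL] using this
    · have := h1 s; simpa [evalL] using this
  · fin_cases k
    · have := h2 s; simpa [evalL] using this
    · have := h1 s; simpa [evalL] using this
  · have := h1 c; simpa [evalL] using this

end Trivial
section Union

variable {G : Type*} [Group G]

lemma union2 (hD : IsGAlgebraic {p : Fin 2 → G | p 0 = 1 ∨ p 1 = 1}) {n : ℕ}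
    (A B : Set (Fin n → G)) (hA : IsGAlgebraic A) (hB : IsGAlgebraic B) :
    IsGAlgebraic (A ∪ B) := by
  obtain ⟨SD, hSDq⟩ := hD
  obtain ⟨Sg1, h1⟩ := hA
  obtain ⟨Sg2, h2⟩ := hB
  refine ⟨{x | ∃ e1 ∈ Sg1, ∃ e2 ∈ Sg2, ∃ d ∈ SD,
    x = (gSubst d.1 ![e1.1 ++ gInv e1.2, e2.1 ++ gInv e2.2],
         gSubst d.2 ![e1.1 ++ gInv e1.2, e2.1 ++ gInv e2.2])}, ?_⟩
  have hval : ∀ (w1 w2 : GTerm G n) (p : Fin n → G),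
      GTerm.eval (w1 ++ gInv w2) p = 1 ↔ GTerm.eval w1 p = GTerm.eval w2 p := by
    intro w1 w2 p
    rw [eval_append, eval_gInv, mul_inv_eq_one]
  ext p
  constructor
  · rintro hp x ⟨e1, he1, e2, he2, d, hd, rfl⟩
    simp only
    rw [eval_gSubst, eval_gSubst]
    have hq : (fun i => GTerm.eval ((![e1.1 ++ gInv e1.2, e2.1 ++ gInv e2.2]) i) p)
        ∈ {p : Fin 2 → G | p 0 = 1 ∨ p 1 = 1} := by
      rcases hp with hp | hp
      · left
        show GTerm.eval ((![e1.1 ++ gInv e1.2, e2.1 ++ gInv e2.2]) 0) p = 1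
        rw [Matrix.cons_val_zero, hval]
        exact (h1 ▸ hp) e1 he1
      · right
        show GTerm.eval ((![e1.1 ++ gInv e1.2, e2.1 ++ gInv e2.2]) 1) p = 1
        rw [Matrix.cons_val_one, Matrix.cons_val_zero, hval]
        exact (h2 ▸ hp) e2 he2
    rw [hSDq] at hq
    exact hq d hd
  · intro hp
    by_contra hn
    rw [Set.mem_union, not_or] at hn
    obtain ⟨hA', hB'⟩ := hn
    rw [h1] at hA'
    rw [h2] at hB'
    simp only [Set.mem_setOf_eq] at hA' hB'
    push_neg at hA' hB'
    obtain ⟨e1, he1, hne1⟩ := hA'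
    obtain ⟨e2, he2, hne2⟩ := hB'
    have hq : (fun i => GTerm.eval ((![e1.1 ++ gInv e1.2, e2.1 ++ gInv e2.2]) i) p)
        ∈ {q : Fin 2 → G | ∀ e ∈ SD, GTerm.eval e.1 q = GTerm.eval e.2 q} := by
      intro d hd
      have := hp _ ⟨e1, he1, e2, he2, d, hd, rfl⟩
      simp only at this
      rw [eval_gSubst, eval_gSubst] at this
      exact this
    rw [← hSDq] at hq
    rcases hq with hq | hq
    · exact hne1 ((hval _ _ _).1 (by simpa using hq))
    · exact hne2 ((hval _ _ _).1 (by simpa using hq))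

lemma eqDomain_of_D (hD : IsGAlgebraic {p : Fin 2 → G | p 0 = 1 ∨ p 1 = 1})
    (g0 : G) (hg0 : g0 ≠ 1) : IsGEqDomain G := by
  intro n m
  induction m with
  | zero =>
    intro Y _
    refine ⟨{(([Sum.inr g0] : GTerm G n), ([Sum.inr (1 : G)] : GTerm G n))}, ?_⟩
    ext p
    constructor
    · rintro ⟨s, ⟨i, rfl⟩, hi⟩
      exact i.elim0
    · intro hsol
      exfalso
      have := hsol _ (Set.mem_singleton _)
      rw [eval_singleton, eval_singleton] at this
      exact hg0 this
  | succ m ih =>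
    intro Y hY
    have hsplit : (⋃ i, Y i) = Y 0 ∪ ⋃ i : Fin m, Y i.succ := by
      ext x
      simp [Set.mem_iUnion, Fin.exists_fin_succ]
    rw [hsplit]
    exact union2 hD _ _ (hY 0) (ih _ (fun i => hY i.succ))

end Union

/-- If a finite Rees matrix semigroup `M(G; I, Λ; P)` with normalized `P` is an
equational domain, then `G` is an equational domain in the group language with
constants; equivalently `{(x,y) : x = 1 or y = 1} ⊆ G²` is algebraic over `G`. -/
theorem group_eqDomain_of_rees_eqDomain (G I Λ : Type*) [Group G] [Fintype G]
    [Fintype I] [Fintype Λ] (P : I → Λ → G) (i0 : I) (l0 : Λ)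
    (hP : Normalized P i0 l0) (h : IsEqDomain (Λ × G × I) (reesMul P)) :
    IsGEqDomain G ∧ IsGAlgebraic {p : Fin 2 → G | p 0 = 1 ∨ p 1 = 1} := by
  classical
  have hY : ∀ i : Fin 2, IsAlgebraic (reesMul P)
      ({p | p i = (l0, 1, i0)} : Set (Fin 2 → Λ × G × I)) := by
    intro i
    refine ⟨{((Sum.inl i, []), (Sum.inr (l0, 1, i0), []))}, ?_⟩
    ext p
    simp [SgTerm.eval, evalL]
  obtain ⟨Sys, hSys⟩ := h 2 2 (fun i => {p | p i = (l0, 1, i0)}) hY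
  have hU : (⋃ i, (fun i : Fin 2 =>
        ({p | p i = (l0, 1, i0)} : Set (Fin 2 → Λ × G × I))) i)
      = {p : Fin 2 → Λ × G × I | p 0 = (l0, 1, i0) ∨ p 1 = (l0, 1, i0)} := by
    ext p
    simp [Set.mem_iUnion, Fin.exists_fin_two]
  rw [hU] at hSys
  by_cases hTriv : ∀ g : G, g = 1
  · exfalso
    by_cases hS : ∀ s : Λ × G × I, s = (l0, 1, i0)
    · obtain ⟨Sys0, hSys0⟩ := h 0 0 Fin.elim0 (fun i => i.elim0)
      have hmem : (Fin.elim0 : Fin 0 → Λ × G × I) ∈ ⋃ i : Fin 0, Fin.elim0 i := by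
        rw [hSys0]
        intro e he
        rw [hS (SgTerm.eval (reesMul P) e.1 Fin.elim0),
          hS (SgTerm.eval (reesMul P) e.2 Fin.elim0)]
      simpa using hmem
    · push_neg at hS
      obtain ⟨s, hs⟩ := hS
      have hp1 : ∀ t, (![(l0, 1, i0), t]) ∈ {p : Fin 2 → Λ × G × I |
          ∀ e ∈ Sys, SgTerm.eval (reesMul P) e.1 p = SgTerm.eval (reesMul P) e.2 p} := by
        intro t
        rw [← hSys]
        left
        simp
      have hp2 : ∀ t, (![t, (l0, 1, i0)]) ∈ {p : Fin 2 → Λ × G × I |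
          ∀ e ∈ Sys, SgTerm.eval (reesMul P) e.1 p = SgTerm.eval (reesMul P) e.2 p} := by
        intro t
        rw [← hSys]
        right
        simp
      have hkey : (![s, s]) ∈ {p : Fin 2 → Λ × G × I |
          p 0 = (l0, 1, i0) ∨ p 1 = (l0, 1, i0)} := by
        rw [hSys]
        intro e he
        have hfst := diag_trick (Prod.fst) (l0, 1, i0) s e.1.1 e.2.1
          (fun t => by
            have h1 := congrArg Prod.fst (hp1 t e he)
            rwa [eval_fst, eval_fst] at h1)
          (fun t => by
            have h1 := congrArg Prod.fst (hp2 t e he)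
            rwa [eval_fst, eval_fst] at h1)
        have hsnd := diag_trick (fun x : Λ × G × I => x.2.2) (l0, 1, i0) s
          (e.1.2.getLastD e.1.1) (e.2.2.getLastD e.2.1)
          (fun t => by
            have h1 := congrArg (fun x : Λ × G × I => x.2.2) (hp1 t e he)
            rwa [eval_snd, eval_snd] at h1)
          (fun t => by
            have h1 := congrArg (fun x : Λ × G × I => x.2.2) (hp2 t e he)
            rwa [eval_snd, eval_snd] at h1)
        have hmid : (SgTerm.eval (reesMul P) e.1 ![s, s]).2.1
            = (SgTerm.eval (reesMul P) e.2 ![s, s]).2.1 := by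
          rw [hTriv ((SgTerm.eval (reesMul P) e.1 ![s, s]).2.1),
            hTriv ((SgTerm.eval (reesMul P) e.2 ![s, s]).2.1)]
        refine Prod.ext ?_ (Prod.ext hmid ?_)
        · rw [eval_fst, eval_fst]; exact hfst
        · rw [eval_snd, eval_snd]; exact hsnd
      rcases hkey with hk | hk
      · exact hs (by simpa using hk)
      · exact hs (by simpa using hk)
  · push_neg at hTriv
    obtain ⟨g0, hg0⟩ := hTriv
    have hD : IsGAlgebraic {p : Fin 2 → G | p 0 = 1 ∨ p 1 = 1} := by
      refine ⟨(fun e : SgTerm (Λ × G × I) 2 × SgTerm (Λ × G × I) 2 =>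
        (trT P i0 l0 e.1, trT P i0 l0 e.2)) '' Sys, ?_⟩
      ext p
      constructor
      · intro hp x hx
        obtain ⟨e, he, rfl⟩ := hx
        have hmem : (fun j => ((l0, p j, i0) : Λ × G × I)) ∈
            {q : Fin 2 → Λ × G × I | q 0 = (l0, 1, i0) ∨ q 1 = (l0, 1, i0)} := by
          rcases hp with hp | hp
          · left; show ((l0, p 0, i0) : Λ × G × I) = _; rw [hp]
          · right; show ((l0, p 1, i0) : Λ × G × I) = _; rw [hp]
        rw [hSys] at hmem
        have h1 := hmem e he
        rw [eval_trT, eval_trT] at h1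
        exact congrArg (fun x : Λ × G × I => x.2.1) h1
      · intro hp
        have hone : (fun j => ((l0, (fun _ : Fin 2 => (1 : G)) j, i0) : Λ × G × I)) ∈
            {q : Fin 2 → Λ × G × I | q 0 = (l0, 1, i0) ∨ q 1 = (l0, 1, i0)} :=
          Or.inl rfl
        rw [hSys] at hone
        have hmem : (fun j => ((l0, p j, i0) : Λ × G × I)) ∈
            {q : Fin 2 → Λ × G × I |
              ∀ e ∈ Sys, SgTerm.eval (reesMul P) e.1 q = SgTerm.eval (reesMul P) e.2 q} := by
          intro e he
          have h1 := hone e he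
          rw [eval_trT, eval_trT] at h1
          have hl := congrArg Prod.fst h1
          have hi := congrArg (fun x : Λ × G × I => x.2.2) h1
          have h2 := hp _ ⟨e, he, rfl⟩
          rw [eval_trT, eval_trT]
          exact Prod.ext hl (Prod.ext h2 hi)
        rw [← hSys] at hmem
        rcases hmem with hm | hm
        · exact Or.inl (congrArg (fun x : Λ × G × I => x.2.1) hm)
        · exact Or.inr (congrArg (fun x : Λ × G × I => x.2.1) hm)
    exact ⟨eqDomain_of_D hD g0 hg0, hD⟩

end Stmt
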